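/- Let S be a finite poset, R ⊆ S, and consider the restriction functor res^S_R (forgetting subspaces at S∖R), the induction functor ind^S_R sending (V, V(r))_{r∈R} to (V, Σ_{r∈R, r≤s} V(r))_{s∈S}, and the coinduction functor coind^S_R sending it to (V, ∩_{r∈R, s≤r} V(r))_{s∈S}. Then ind^S_R is left adjoint to res^S_R, and coind^S_R is right adjoint to res^S_R. -/

import Mathlib

/-- An `S`-space over a field `k`: a finite-dimensional `k`-vector space together with a
monotone family of subspaces indexed by the poset `S`. -/
structure PSp (k : Type) [Field k] (S : Type) [Preorder S] where
  carrier : Type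
  [acg : AddCommGroup carrier]
  [mod : Module k carrier]
  [fin : FiniteDimensional k carrier]
  sub : S → Submodule k carrier
  mono : ∀ {s t : S}, s ≤ t → sub s ≤ sub t

attribute [instance] PSp.acg PSp.mod PSp.fin

variable {k : Type} [Field k] {S : Type} [PartialOrder S] [Fintype S]

/-- A morphism of `S`-spaces: a `k`-linear map respecting the distinguished subspaces. -/
@[ext]
structure PHom (U V : PSp k S) where
  toLinearMap : U.carrier →ₗ[k] V.carrier
  maps : ∀ s : S, ∀ x ∈ U.sub s, toLinearMap x ∈ V.sub s

/-- Composition of morphisms of `S`-spaces. -/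
def PHom.comp {U V W : PSp k S} (g : PHom V W) (f : PHom U V) : PHom U W :=
  ⟨g.toLinearMap ∘ₗ f.toLinearMap, fun s x hx => g.maps s _ (f.maps s x hx)⟩

/-- The identity morphism of an `S`-space. -/
def PHom.id (U : PSp k S) : PHom U U := ⟨LinearMap.id, fun _ _ hx => hx⟩

/-- A morphism `f : U → V` of `S`-spaces is proper if `f(U(s)) = V(s) ∩ im f` for all `s`. -/
def PHom.Proper {U V : PSp k S} (f : PHom U V) : Prop :=
  ∀ s : S, (U.sub s).map f.toLinearMap = V.sub s ⊓ LinearMap.range f.toLinearMap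

/-- The restriction functor `res^S_R` on objects. -/
def resS (R : Set S) (V : PSp k S) : PSp k ↥R where
  carrier := V.carrier
  sub r := V.sub ↑r
  mono h := V.mono h

/-- The induction functor `ind^S_R` on objects: `X(s) = Σ_{r ∈ R, r ≤ s} V(r)`. -/
def indS (R : Set S) (V : PSp k ↥R) : PSp k S where
  carrier := V.carrier
  sub s := ⨆ (r : R) (_ : (r : S) ≤ s), V.sub r
  mono := by
    intro s t h
    refine iSup_mono fun r => ?_
    exact iSup_le fun hr => le_iSup_of_le (hr.trans h) le_rfl

/-- The coinduction functor `coind^S_R` on objects: `X(s) = ∩_{r ∈ R, s ≤ r} V(r)`. -/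
def coindS (R : Set S) (V : PSp k ↥R) : PSp k S where
  carrier := V.carrier
  sub s := ⨅ (r : R) (_ : s ≤ (r : S)), V.sub r
  mono := by
    intro s t h
    refine le_iInf fun r => le_iInf fun hr => ?_
    exact iInf_le_of_le r (iInf_le_of_le (h.trans hr) le_rfl)

/-- The restriction functor on morphisms. -/
def resHom (R : Set S) {V W : PSp k S} (f : PHom V W) : PHom (resS R V) (resS R W) :=
  ⟨f.toLinearMap, fun r x hx => f.maps ↑r x hx⟩

/-- The induction functor on morphisms. -/
def indHom (R : Set S) {V W : PSp k ↥R} (f : PHom V W) : PHom (indS R V) (indS R W) := by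
  refine ⟨f.toLinearMap, fun s x hx => ?_⟩
  have h1 : Submodule.map f.toLinearMap ((indS R V).sub s) ≤ (indS R W).sub s := by
    show Submodule.map f.toLinearMap (⨆ (r : R) (_ : (r : S) ≤ s), V.sub r) ≤ _
    rw [Submodule.map_iSup]
    refine iSup_mono fun r => ?_
    rw [Submodule.map_iSup]
    refine iSup_mono fun hr => ?_
    exact Submodule.map_le_iff_le_comap.mpr fun y hy => Submodule.mem_comap.mpr (f.maps r y hy)
  exact h1 (Submodule.mem_map_of_mem hx)

/-- The coinduction functor on morphisms. -/
def coindHom (R : Set S) {V W : PSp k ↥R} (f : PHom V W) : PHom (coindS R V) (coindS R W) := by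
  refine ⟨f.toLinearMap, fun s (x : V.carrier) hx => ?_⟩
  have hx' : x ∈ ⨅ (r : R) (_ : s ≤ (r : S)), V.sub r := hx
  have key : ∀ r : R, s ≤ (r : S) → x ∈ V.sub r := fun r hr => by
    rw [Submodule.mem_iInf] at hx'
    have := hx' r
    rw [Submodule.mem_iInf] at this
    exact this hr
  show f.toLinearMap x ∈ ⨅ (r : R) (_ : s ≤ (r : S)), W.sub r
  rw [Submodule.mem_iInf]
  intro r
  rw [Submodule.mem_iInf]
  intro hr
  exact f.maps r x (key r hr)

/-- `ind^S_R` is left adjoint to `res^S_R`, and `coind^S_R` is right adjoint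
to `res^S_R`: there are bijections of Hom-sets natural in both variables. -/
theorem stmt10 (R : Set S) :
    (∃ e : ∀ (V : PSp k ↥R) (W : PSp k S), PHom (indS R V) W ≃ PHom V (resS R W),
      ∀ (V V' : PSp k ↥R) (W W' : PSp k S) (f : PHom V' V) (g : PHom W W')
        (h : PHom (indS R V) W),
        e V' W' ((g.comp h).comp (indHom R f)) = ((resHom R g).comp (e V W h)).comp f) ∧
    (∃ e : ∀ (W : PSp k S) (V : PSp k ↥R), PHom (resS R W) V ≃ PHom W (coindS R V),
      ∀ (W W' : PSp k S) (V V' : PSp k ↥R) (g : PHom W' W) (f : PHom V V')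
        (h : PHom (resS R W) V),
        e W' V' ((f.comp h).comp (resHom R g)) = ((coindHom R f).comp (e W V h)).comp g) := by
  constructor
  · refine ⟨fun V W => ⟨fun h => ⟨h.toLinearMap, fun r x hx => ?_⟩,
      fun h => ⟨h.toLinearMap, fun s x hx => ?_⟩, fun h => rfl, fun h => rfl⟩,
      fun V V' W W' f g h => rfl⟩
    · exact h.maps (r : S) x (by
        have : V.sub r ≤ (indS R V).sub (r : S) :=
          le_iSup_of_le r (le_iSup_of_le le_rfl le_rfl)
        exact this hx)
    · have : Submodule.map h.toLinearMap ((indS R V).sub s) ≤ W.sub s := by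
        show Submodule.map h.toLinearMap (⨆ (r : R) (_ : (r : S) ≤ s), V.sub r) ≤ _
        rw [Submodule.map_iSup]
        refine iSup_le fun r => ?_
        rw [Submodule.map_iSup]
        refine iSup_le fun hr => ?_
        refine Submodule.map_le_iff_le_comap.mpr fun y hy => ?_
        exact Submodule.mem_comap.mpr (W.mono hr (h.maps r y hy))
      exact this (Submodule.mem_map_of_mem hx)
  · refine ⟨fun W V => ⟨fun h => ⟨h.toLinearMap, fun s x hx => ?_⟩,
      fun h => ⟨h.toLinearMap, fun r x hx => ?_⟩, fun h => rfl, fun h => rfl⟩,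
      fun W W' V V' g f h => rfl⟩
    · show h.toLinearMap x ∈ ⨅ (r : R) (_ : s ≤ (r : S)), V.sub r
      exact (Submodule.mem_iInf _).mpr fun r => (Submodule.mem_iInf _).mpr fun hr =>
        h.maps r x (W.mono hr hx)
    · have := h.maps (r : S) x hx
      change _ ∈ ⨅ (r' : R) (_ : (r : S) ≤ (r' : S)), V.sub r' at this
      exact (Submodule.mem_iInf _).mp ((Submodule.mem_iInf _).mp this r) le_rfl
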